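/- Let L be a positive integer, a a nonzero element of GF(2^L), and ξ an element of the algebraic closure of GF(2) with ξ^{2^L + 1} = 1 and ξ ≠ 1. Then the coset a/(ξ+1) + GF(2^L) equals the set { a/(ξ'+1) : ξ'^{2^L+1} = 1, ξ' ≠ 1 }. -/

import Mathlib

theorem stmt_15 (L : ℕ) (hL : 0 < L) (a ξ : AlgebraicClosure (ZMod 2))
    (haL : a ^ (2 ^ L) = a) (ha : a ≠ 0)
    (hξ : ξ ^ (2 ^ L + 1) = 1) (hξ1 : ξ ≠ 1) :
    {y : AlgebraicClosure (ZMod 2) | ∃ b, b ^ (2 ^ L) = b ∧ y = a / (ξ + 1) + b} =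
      {y : AlgebraicClosure (ZMod 2) |
        ∃ ξ' : AlgebraicClosure (ZMod 2),
          ξ' ^ (2 ^ L + 1) = 1 ∧ ξ' ≠ 1 ∧ y = a / (ξ' + 1)} := by
  have h2 : (2 : AlgebraicClosure (ZMod 2)) = 0 := by
    exact_mod_cast CharP.cast_eq_zero (AlgebraicClosure (ZMod 2)) 2
  have frob : ∀ x y : AlgebraicClosure (ZMod 2),
      (x + y) ^ (2 ^ L) = x ^ (2 ^ L) + y ^ (2 ^ L) := fun x y =>
    add_pow_char_pow x y 2 L
  -- for any ξ' ∈ μ_{2^L+1} \ {1}: denominator nonzero and a/(ξ'+1) solves z^q+z=a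
  have key : ∀ ξ' : AlgebraicClosure (ZMod 2), ξ' ^ (2 ^ L + 1) = 1 → ξ' ≠ 1 →
      ξ' + 1 ≠ 0 ∧ (a / (ξ' + 1)) ^ (2 ^ L) + a / (ξ' + 1) = a := by
    intro ξ' h1 hne1
    have hd : ξ' + 1 ≠ 0 := by
      intro h
      exact hne1 (by linear_combination h - h2)
    refine ⟨hd, ?_⟩
    have hm : ξ' ^ (2 ^ L) * ξ' = 1 := by rw [← pow_succ]; exact h1
    have hdq : (ξ' + 1) ^ (2 ^ L) ≠ 0 := pow_ne_zero _ hd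
    have hdq' : (ξ' + 1) ^ (2 ^ L) = ξ' ^ (2 ^ L) + 1 := by
      rw [frob, one_pow]
    rw [div_pow, haL, hdq']
    have hdq2 : ξ' ^ (2 ^ L) + 1 ≠ 0 := by rw [← hdq']; exact hdq
    field_simp
    linear_combination -hm
  have inv : ∀ y : AlgebraicClosure (ZMod 2), y ^ (2 ^ L) + y = a →
      ∃ ξ' : AlgebraicClosure (ZMod 2), ξ' ^ (2 ^ L + 1) = 1 ∧ ξ' ≠ 1 ∧ y = a / (ξ' + 1) := by
    intro y hy
    have hy0 : y ≠ 0 := by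
      rintro rfl
      apply ha
      simpa using hy.symm
    have hyq : y ^ (2 ^ L) ≠ 0 := pow_ne_zero _ hy0
    refine ⟨(a + y) / y, ?_, ?_, ?_⟩
    · rw [pow_succ, div_pow, frob, haL]
      field_simp
      linear_combination a * hy + a ^ 2 * h2
    · intro h
      apply ha
      field_simp at h
      linear_combination h
    · have hxy : (a + y) / y + 1 = a / y := by
        field_simp
        linear_combination y * h2
      rw [hxy, div_div_eq_mul_div, mul_comm, mul_div_assoc, div_self ha, mul_one]
  ext y
  simp only [Set.mem_setOf_eq]
  constructor
  · rintro ⟨b, hb, rfl⟩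
    apply inv
    obtain ⟨hd, hx⟩ := key ξ hξ hξ1
    rw [frob, hb]
    linear_combination hx + b * h2
  · rintro ⟨ξ', h1, hne1, rfl⟩
    obtain ⟨hd, hd'⟩ := key ξ hξ hξ1
    obtain ⟨he, he'⟩ := key ξ' h1 hne1
    refine ⟨a / (ξ' + 1) + a / (ξ + 1), ?_, by linear_combination -(a / (ξ + 1)) * h2⟩
    rw [frob]
    linear_combination he' + hd' - h2 * (a / (ξ' + 1)) - h2 * (a / (ξ + 1)) + h2 * a
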